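/- (Lemma 3.2) Under the Async-PADMM update rules, define ℓ_k(z) := g_k(z) + ⟨y_k^t, z − x^{t+1}⟩ + (ρ_k/2)‖z − x^{t+1}‖². Then for every k and every t ≥ T_k: ℓ_k(x_k^{t+1}) − ℓ_k(x_k^t) ≤ −(ρ_k/2 − (7/2)L_k)‖x_k^t − x_k^{t+1}‖² + (L_k T_k/2) Σ_{i=0}^{T_k−1} ‖x^{t+1−i} − x^{t−i}‖² + (7L_k/(2ρ_k²)) ‖y_k^{t+1} − y_k^t‖². -/

import Mathlib

open RealInnerProductSpace

/-- Mean value theorem along a segment, in gradient form. -/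
lemma mvt_inner_seg {E : Type*} [NormedAddCommGroup E] [InnerProductSpace ℝ E] [CompleteSpace E]
    (f : E → ℝ) (hf : Differentiable ℝ f) (a b : E) :
    ∃ c ∈ Set.Icc (0:ℝ) 1, f a - f b = ⟪gradient f (b + c • (a - b)), a - b⟫ := by
  have hpath : ∀ s : ℝ, HasDerivAt (fun r : ℝ => b + r • (a - b)) (a - b) s := by
    intro s
    simpa using ((hasDerivAt_id s).smul_const (a - b)).const_add b
  have hφ : ∀ s : ℝ, HasDerivAt (fun r : ℝ => f (b + r • (a - b)))
      ⟪gradient f (b + s • (a - b)), a - b⟫ s := by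
    intro s
    have h1 := ((hf (b + s • (a - b))).hasGradientAt).hasFDerivAt
    have h2 := h1.comp_hasDerivAt s (hpath s)
    simpa [Function.comp_def] using h2
  have hcont : ContinuousOn (fun r : ℝ => f (b + r • (a - b))) (Set.Icc 0 1) := by
    apply Continuous.continuousOn
    exact hf.continuous.comp (by continuity)
  obtain ⟨c, hc, hslope⟩ := exists_hasDerivAt_eq_slope (fun r : ℝ => f (b + r • (a - b)))
    (fun s => ⟪gradient f (b + s • (a - b)), a - b⟫) zero_lt_one hcont (fun s _ => hφ s)
  refine ⟨c, ⟨hc.1.le, hc.2.le⟩, ?_⟩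
  have h1 : f (b + (1:ℝ) • (a - b)) = f a := by simp
  simp only [h1, zero_smul, add_zero] at hslope
  rw [hslope]
  ring

/-- Abstract quadratic expansion identity. -/
lemma quad_expand {E : Type*} [NormedAddCommGroup E] [InnerProductSpace ℝ E]
    (yv A d : E) (r gdiff I : ℝ) (hga : gdiff = I) :
    gdiff + (⟪yv, A⟫ - ⟪yv, A - d⟫) + r / 2 * (‖A‖ ^ 2 - ‖A - d‖ ^ 2)
      = (I + ⟪yv, d⟫ + r * ⟪A, d⟫) - r / 2 * ‖d‖ ^ 2 := by
  rw [norm_sub_sq_real, inner_sub_right, hga]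
  ring

set_option maxHeartbeats 2000000 in
/-- (Lemma 3.2) Under the Async-PADMM update rules, with
`ℓ_k(z) := g_k(z) + ⟨y_k^t, z − x^{t+1}⟩ + (ρ_k/2)‖z − x^{t+1}‖²`, for every `k`
and every `t ≥ T_k`:
`ℓ_k(x_k^{t+1}) − ℓ_k(x_k^t) ≤ −(ρ_k/2 − (7/2)L_k)‖x_k^t − x_k^{t+1}‖²
  + (L_k T_k/2) ∑_{i=0}^{T_k−1} ‖x^{t+1−i} − x^{t−i}‖²
  + (7L_k/(2ρ_k²)) ‖y_k^{t+1} − y_k^t‖²`. -/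
theorem stmt_6 {E : Type*} [NormedAddCommGroup E] [InnerProductSpace ℝ E] [CompleteSpace E]
    {K : ℕ} (g : Fin K → E → ℝ) (L ρ : Fin K → ℝ) (T : Fin K → ℕ)
    (x : ℕ → E) (xk : Fin K → ℕ → E) (y : Fin K → ℕ → E) (τ : Fin K → ℕ → ℕ)
    (hL : ∀ k, 0 < L k) (hρ : ∀ k, 0 < ρ k)
    (hdiff : ∀ k, Differentiable ℝ (g k))
    (hlip : ∀ k, ∀ u v : E, ‖gradient (g k) u - gradient (g k) v‖ ≤ L k * ‖u - v‖)
    (hτ1 : ∀ k t, τ k t ≤ t) (hτ2 : ∀ k t, t ≤ τ k t + T k)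
    (hxk : ∀ k t, xk k (t + 1)
      = x (t + 1) - (ρ k)⁻¹ • (gradient (g k) (x (τ k (t + 1))) + y k t))
    (hy : ∀ k t, y k (t + 1) = y k t + ρ k • (xk k (t + 1) - x (t + 1)))
    (k : Fin K) (t : ℕ) (ht : T k ≤ t)
    (ℓ : E → ℝ)
    (hℓ : ∀ z : E, ℓ z = g k z + ⟪y k t, z - x (t + 1)⟫ + ρ k / 2 * ‖z - x (t + 1)‖ ^ 2) :
    ℓ (xk k (t + 1)) - ℓ (xk k t)
      ≤ -(ρ k / 2 - 7 / 2 * L k) * ‖xk k t - xk k (t + 1)‖ ^ 2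
        + L k * (T k : ℝ) / 2 * ∑ i ∈ Finset.range (T k), ‖x (t + 1 - i) - x (t - i)‖ ^ 2
        + 7 * L k / (2 * ρ k ^ 2) * ‖y k (t + 1) - y k t‖ ^ 2 := by
  classical
  set τ' := τ k (t + 1) with hτ'def
  set a := xk k (t + 1) with hadef
  set b := xk k t with hbdef
  set G := gradient (g k) with hGdef
  have hρ0 : ρ k ≠ 0 := ne_of_gt (hρ k)
  set d := a - b with hddef
  set A := a - x (t + 1) with hAdef
  set v := x (t + 1) - x τ' with hvdef
  -- optimality (zero gradient) condition
  have hAeq : A = -((ρ k)⁻¹ • (G (x τ') + y k t)) := by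
    rw [hAdef, hadef, hxk k t]
    abel
  have hzero : G (x τ') + y k t = -(ρ k • A) := by
    rw [hAeq, smul_neg, smul_smul, mul_inv_cancel₀ hρ0, one_smul, neg_neg]
  -- the dual update
  have hΔy : y k (t + 1) - y k t = ρ k • A := by
    rw [hy k t, hAdef, hadef]
    abel
  have hnormΔy : ‖y k (t + 1) - y k t‖ = ρ k * ‖A‖ := by
    rw [hΔy, norm_smul, Real.norm_eq_abs, abs_of_pos (hρ k)]
  -- mean value theorem
  obtain ⟨c, hc, hgab⟩ := mvt_inner_seg (g k) (hdiff k) a b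
  obtain ⟨hc0, hc1⟩ := hc
  set ξ := b + c • (a - b) with hξdef
  -- key identity
  have hGsub : G ξ - G (x τ') = G ξ + y k t + ρ k • A := by
    have h : G (x τ') = -(ρ k • A) - y k t := by
      rw [eq_sub_iff_add_eq, hzero]
    rw [h]
    abel
  have e3 : ⟪G ξ - G (x τ'), d⟫ = ⟪G ξ, d⟫ + ⟪y k t, d⟫ + ρ k * ⟪A, d⟫ := by
    rw [hGsub, inner_add_left, inner_add_left, real_inner_smul_left]
  have hga : g k a - g k b = ⟪G ξ, d⟫ := by rw [hgab]
  have hkey : ℓ a - ℓ b = ⟪G ξ - G (x τ'), d⟫ - ρ k / 2 * ‖d‖ ^ 2 := by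
    have hq := quad_expand (y k t) A d (ρ k) (g k a - g k b) ⟪G ξ, d⟫ hga
    rw [hℓ a, hℓ b, e3]
    rw [show b - x (t + 1) = A - d from by rw [hAdef, hddef]; abel,
        show a - x (t + 1) = A from hAdef.symm]
    linarith [hq]
  -- bound the inner product
  have hξa : ‖ξ - a‖ ≤ ‖d‖ := by
    have h : ξ - a = (c - 1) • d := by
      rw [hξdef, hddef, sub_smul, one_smul]
      abel
    rw [h, norm_smul, Real.norm_eq_abs]
    have habs : |c - 1| ≤ 1 := by
      rw [abs_le]; constructor <;> linarith
    nlinarith [norm_nonneg d]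
  have h2 : ‖ξ - x τ'‖ ≤ ‖d‖ + (‖A‖ + ‖v‖) := by
    calc ‖ξ - x τ'‖ = ‖(ξ - a) + (A + v)‖ := by
          congr 1; rw [hAdef, hvdef]; abel
      _ ≤ ‖ξ - a‖ + ‖A + v‖ := norm_add_le _ _
      _ ≤ ‖ξ - a‖ + (‖A‖ + ‖v‖) := by gcongr; exact norm_add_le _ _
      _ ≤ ‖d‖ + (‖A‖ + ‖v‖) := by gcongr
  have h1 : ⟪G ξ - G (x τ'), d⟫ ≤ L k * (‖d‖ + (‖A‖ + ‖v‖)) * ‖d‖ := by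
    calc ⟪G ξ - G (x τ'), d⟫ ≤ ‖G ξ - G (x τ')‖ * ‖d‖ := real_inner_le_norm _ _
      _ ≤ L k * ‖ξ - x τ'‖ * ‖d‖ :=
          mul_le_mul_of_nonneg_right (hlip k _ _) (norm_nonneg _)
      _ ≤ L k * (‖d‖ + (‖A‖ + ‖v‖)) * ‖d‖ :=
          mul_le_mul_of_nonneg_right
            (mul_le_mul_of_nonneg_left h2 (hL k).le) (norm_nonneg _)
  -- the sum bound
  set S := ∑ i ∈ Finset.range (T k), ‖x (t + 1 - i) - x (t - i)‖ ^ 2 with hSdef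
  have hSnonneg : 0 ≤ S := Finset.sum_nonneg fun i _ => by positivity
  set m := t + 1 - τ' with hmdef
  have hm1 : τ' ≤ t + 1 := hτ1 k (t + 1)
  have hmT : m ≤ T k := by have := hτ2 k (t + 1); omega
  have htel : v = ∑ i ∈ Finset.range m, (x (t + 1 - i) - x (t - i)) := by
    have h := Finset.sum_range_sub' (fun i => x (t + 1 - i)) m
    have hterm : ∀ i ∈ Finset.range m,
        x (t + 1 - i) - x (t + 1 - (i + 1)) = x (t + 1 - i) - x (t - i) := by
      intro i _
      congr 2
      omega
    rw [Finset.sum_congr rfl hterm] at h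
    rw [h, hvdef]
    congr 2
    omega
  have hnormv : ‖v‖ ≤ ∑ i ∈ Finset.range m, ‖x (t + 1 - i) - x (t - i)‖ := by
    rw [htel]; exact norm_sum_le _ _
  have h3 : ‖v‖ ^ 2 ≤ (T k : ℝ) * S := by
    have hCS : (∑ i ∈ Finset.range m, ‖x (t + 1 - i) - x (t - i)‖) ^ 2
        ≤ (m : ℝ) * ∑ i ∈ Finset.range m, ‖x (t + 1 - i) - x (t - i)‖ ^ 2 := by
      have h := sq_sum_le_card_mul_sum_sq (s := Finset.range m)
        (f := fun i => ‖x (t + 1 - i) - x (t - i)‖)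
      simpa using h
    have hsq : ‖v‖ ^ 2 ≤ (∑ i ∈ Finset.range m, ‖x (t + 1 - i) - x (t - i)‖) ^ 2 :=
      pow_le_pow_left₀ (norm_nonneg v) hnormv 2
    have hmono : ∑ i ∈ Finset.range m, ‖x (t + 1 - i) - x (t - i)‖ ^ 2 ≤ S := by
      apply Finset.sum_le_sum_of_subset_of_nonneg (Finset.range_subset_range.2 hmT)
      intro i _ _; positivity
    have hmcast : (m : ℝ) ≤ (T k : ℝ) := Nat.cast_le.2 hmT
    calc ‖v‖ ^ 2 ≤ (m : ℝ) * ∑ i ∈ Finset.range m, ‖x (t + 1 - i) - x (t - i)‖ ^ 2 :=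
          hsq.trans hCS
      _ ≤ (T k : ℝ) * S :=
          mul_le_mul hmcast hmono (Finset.sum_nonneg fun i _ => by positivity)
            (Nat.cast_nonneg _)
  -- assemble
  have hW : ‖xk k t - xk k (t + 1)‖ = ‖d‖ := by rw [hddef, ← hadef, ← hbdef, norm_sub_rev]
  have hΔy2 : 7 * L k / (2 * ρ k ^ 2) * ‖y k (t + 1) - y k t‖ ^ 2 = 7 * L k / 2 * ‖A‖ ^ 2 := by
    rw [hnormΔy]
    field_simp
  rw [hW, hΔy2]
  have h3L : L k * ‖v‖ ^ 2 ≤ L k * ((T k : ℝ) * S) :=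
    mul_le_mul_of_nonneg_left h3 (hL k).le
  nlinarith [hkey, h1, h3L, mul_nonneg (hL k).le (sq_nonneg (‖d‖ - ‖A‖)),
    mul_nonneg (hL k).le (sq_nonneg ‖d‖), mul_nonneg (hL k).le (sq_nonneg ‖A‖),
    mul_nonneg (hL k).le (sq_nonneg ‖v‖),
    mul_nonneg (hL k).le (sq_nonneg (2 * ‖d‖ - ‖v‖)),
    mul_nonneg (hL k).le (mul_nonneg (Nat.cast_nonneg (T k) : (0:ℝ) ≤ T k) hSnonneg),
    norm_nonneg d, norm_nonneg A, norm_nonneg v]
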